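/- Let V be a finite-dimensional ℚ-vector space with a mixed Hodge structure, and let T : V → V be an automorphism such that log(T^N) : V → V(-1) is a morphism of mixed Hodge structures for some N ≥ 1 with T^N unipotent, where V(-1) denotes the Tate twist (weight filtration shifted so that W_j V(-1) = W_{j-2}V). If T is additionally a morphism of mixed Hodge structures V → V, then T^N = id_V. -/

import Mathlib

open TensorProduct

/-- Complex conjugation on the complexification `ℂ ⊗[ℚ] V`. -/
noncomputable def conjC (V : Type) [AddCommGroup V] [Module ℚ V] :
    (ℂ ⊗[ℚ] V) ≃ₗ[ℚ] (ℂ ⊗[ℚ] V) :=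
  TensorProduct.congr (Complex.conjAe.toLinearEquiv.restrictScalars ℚ)
    (LinearEquiv.refl ℚ V)

/-- The conjugate of a complex subspace of the complexification. -/
noncomputable def conjSub {V : Type} [AddCommGroup V] [Module ℚ V]
    (p : Submodule ℂ (ℂ ⊗[ℚ] V)) : Submodule ℂ (ℂ ⊗[ℚ] V) :=
  Submodule.span ℂ (conjC V '' (p : Set (ℂ ⊗[ℚ] V)))

/-- A mixed Hodge structure on a rational vector space `V`: an increasing
(exhaustive, finite) weight filtration `W` on `V` and a decreasing Hodge
filtration `F` on `V ⊗ ℂ` such that `F` and its conjugate induce `n`-opposed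
filtrations on each weight-graded piece `Gr^W_n`. -/
structure MixedHodge (V : Type) [AddCommGroup V] [Module ℚ V] where
  W : ℤ → Submodule ℚ V
  F : ℤ → Submodule ℂ (ℂ ⊗[ℚ] V)
  monoW : Monotone W
  antiF : Antitone F
  botW : ∃ a : ℤ, W a = ⊥
  topW : ∃ b : ℤ, W b = ⊤
  topF : ∃ a : ℤ, F a = ⊤
  botF : ∃ b : ℤ, F b = ⊥
  graded_sup : ∀ n p : ℤ,
    ((W n).baseChange ℂ ⊓ F p) ⊔ ((W n).baseChange ℂ ⊓ conjSub (F (n - p + 1)))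
        ⊔ (W (n - 1)).baseChange ℂ = (W n).baseChange ℂ
  graded_inf : ∀ n p : ℤ,
    (((W n).baseChange ℂ ⊓ F p) ⊔ (W (n - 1)).baseChange ℂ) ⊓
        (((W n).baseChange ℂ ⊓ conjSub (F (n - p + 1))) ⊔ (W (n - 1)).baseChange ℂ)
      ≤ (W (n - 1)).baseChange ℂ

/-- A morphism of mixed Hodge structures: a `ℚ`-linear map compatible with the
weight filtration and (after complexification) the Hodge filtration. -/
def IsMHSHom {V V' : Type} [AddCommGroup V] [Module ℚ V]
    [AddCommGroup V'] [Module ℚ V']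
    (HV : MixedHodge V) (HV' : MixedHodge V') (f : V →ₗ[ℚ] V') : Prop :=
  (∀ n : ℤ, (HV.W n).map f ≤ HV'.W n) ∧
  (∀ p : ℤ, (HV.F p).map (f.baseChange ℂ) ≤ HV'.F p)

namespace MHSAux
variable {V : Type} [AddCommGroup V] [Module ℚ V]

lemma baseChange_mono {p q : Submodule ℚ V} (h : p ≤ q) :
    p.baseChange ℂ ≤ q.baseChange ℂ :=
  Submodule.baseChange_mono ℂ h

lemma map_baseChange_le (f : Module.End ℚ V) {p q : Submodule ℚ V}
    (h : ∀ x ∈ p, f x ∈ q) :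
    ∀ x ∈ p.baseChange ℂ, f.baseChange ℂ x ∈ q.baseChange ℂ := by
  intro x hx
  rw [Submodule.baseChange_eq_span] at hx
  induction hx using Submodule.span_induction with
  | mem z hz =>
      obtain ⟨v, hv, rfl⟩ := hz
      simpa using Submodule.tmul_mem_baseChange_of_mem 1 (h v hv)
  | zero => simp
  | add _ _ _ _ h1 h2 => rw [map_add]; exact add_mem h1 h2
  | smul c _ _ h1 => rw [map_smul]; exact Submodule.smul_mem _ _ h1

lemma conjC_comm (f : Module.End ℚ V) (x : ℂ ⊗[ℚ] V) :
    f.baseChange ℂ (conjC V x) = conjC V (f.baseChange ℂ x) := by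
  induction x using TensorProduct.induction_on with
  | zero => simp
  | tmul c v => rfl
  | add a b ha hb => simp only [map_add, ha, hb]

lemma conjSub_mono {p q : Submodule ℂ (ℂ ⊗[ℚ] V)} (h : p ≤ q) :
    conjSub p ≤ conjSub q :=
  Submodule.span_mono (Set.image_mono h)

lemma conjSub_top : conjSub (⊤ : Submodule ℂ (ℂ ⊗[ℚ] V)) = ⊤ := by
  rw [conjSub]
  have : conjC V '' ((⊤ : Submodule ℂ (ℂ ⊗[ℚ] V)) : Set (ℂ ⊗[ℚ] V)) = Set.univ := by
    rw [Submodule.top_coe, Set.image_univ]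
    exact (conjC V).surjective.range_eq
  rw [this, Submodule.span_univ]

lemma conjSub_bot : conjSub (⊥ : Submodule ℂ (ℂ ⊗[ℚ] V)) = ⊥ := by
  rw [conjSub]
  simp

lemma mapsTo_conjSub (f : Module.End ℚ V) {p q : Submodule ℂ (ℂ ⊗[ℚ] V)}
    (h : ∀ x ∈ p, f.baseChange ℂ x ∈ q) :
    ∀ x ∈ conjSub p, f.baseChange ℂ x ∈ conjSub q := by
  intro x hx
  induction hx using Submodule.span_induction with
  | mem z hz =>
      obtain ⟨v, hv, rfl⟩ := hz
      rw [conjC_comm]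
      exact Submodule.subset_span ⟨_, h v hv, rfl⟩
  | zero => simp
  | add _ _ _ _ h1 h2 => rw [map_add]; exact add_mem h1 h2
  | smul c _ _ h1 => rw [map_smul]; exact Submodule.smul_mem _ _ h1

end MHSAux

namespace MHSAux
variable {V : Type} [AddCommGroup V] [Module ℚ V]

lemma lemA (H : MixedHodge V) (m : ℤ) (y : ℂ ⊗[ℚ] V)
    (hy : y ∈ (H.W m).baseChange ℂ)
    (h : ∀ p : ℤ, y ∈ ((H.W m).baseChange ℂ ⊓ H.F p)
        ⊔ ((H.W m).baseChange ℂ ⊓ conjSub (H.F (m - p + 3)))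
        ⊔ (H.W (m - 1)).baseChange ℂ) :
    y ∈ (H.W (m - 1)).baseChange ℂ := by
  obtain ⟨a, ha⟩ := H.topF
  obtain ⟨b, hb⟩ := H.botF
  have key : ∀ q : ℤ, a ≤ q →
      y ∈ ((H.W m).baseChange ℂ ⊓ conjSub (H.F q)) ⊔ (H.W (m - 1)).baseChange ℂ := by
    refine Int.le_induction ?_ ?_
    ·
      have h1 : conjSub (H.F a) = ⊤ := by rw [ha]; exact conjSub_top
      rw [h1, inf_top_eq]
      exact Submodule.mem_sup_left hy
    · intro q hq ih
      have h2 := h (m - q + 2)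
      have e1 : m - (m - q + 2) + 3 = q + 1 := by ring
      rw [e1] at h2
      set Wm := (H.W m).baseChange ℂ with hWm
      set Wm1 := (H.W (m - 1)).baseChange ℂ with hWm1
      set A := Wm ⊓ H.F (m - q + 2) with hA
      set B1 := (Wm ⊓ conjSub (H.F (q + 1))) ⊔ Wm1 with hB1
      have h3 : y ∈ B1 ⊔ A := by
        rw [sup_comm, hB1, ← sup_assoc]
        exact h2
      have hBq : y ∈ (Wm ⊓ conjSub (H.F q)) ⊔ Wm1 := ih
      have hmod : (B1 ⊔ A) ⊓ ((Wm ⊓ conjSub (H.F q)) ⊔ Wm1)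
          = B1 ⊔ (A ⊓ ((Wm ⊓ conjSub (H.F q)) ⊔ Wm1)) := by
        refine sup_inf_assoc_of_le _ ?_
        exact sup_le_sup_right (inf_le_inf_left _ (conjSub_mono (H.antiF (by omega)))) _
      have hAcap : A ⊓ ((Wm ⊓ conjSub (H.F q)) ⊔ Wm1) ≤ Wm1 := by
        have hg := H.graded_inf m (m - q + 2)
        have e2 : m - (m - q + 2) + 1 = q - 1 := by ring
        rw [e2] at hg
        refine le_trans (inf_le_inf ?_ ?_) hg
        · exact le_sup_left
        · exact sup_le_sup_right (inf_le_inf_left _ (conjSub_mono (H.antiF (by omega)))) _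
      have h4 : y ∈ B1 ⊔ (A ⊓ ((Wm ⊓ conjSub (H.F q)) ⊔ Wm1)) := by
        rw [← hmod]
        exact Submodule.mem_inf.mpr ⟨h3, hBq⟩
      exact (sup_le le_rfl (hAcap.trans le_sup_right)) h4
  have hy2 := key (max a b) (le_max_left a b)
  have hFb : conjSub (H.F (max a b)) = ⊥ := by
    have : H.F (max a b) = ⊥ := le_bot_iff.mp (hb ▸ H.antiF (le_max_right a b))
    rw [this, conjSub_bot]
  rwa [hFb, inf_bot_eq, bot_sup_eq] at hy2

end MHSAux

/-- Let `V` carry a mixed Hodge structure and let `T` be an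
automorphism of `V` with `T^N` unipotent such that `log(T^N)` is a morphism of
mixed Hodge structures `V → V(-1)` (i.e. it shifts the weight filtration by
`-2` and the Hodge filtration by `-1`).  If `T` is moreover a morphism of
mixed Hodge structures `V → V`, then `T^N = id`. -/
theorem tate_twist_morphism_forces_finite_order
    (V : Type) [AddCommGroup V] [Module ℚ V] [FiniteDimensional ℚ V]
    (H : MixedHodge V)
    (T : Module.End ℚ V) (hT : IsUnit T)
    (N : ℕ) (hN : 1 ≤ N) (hnil : IsNilpotent (T ^ N - 1))
    (L : Module.End ℚ V)
    (hL : L = ∑ j ∈ Finset.Icc 1 (Module.finrank ℚ V),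
        (((-1 : ℚ) ^ (j + 1) / (j : ℚ)) • (T ^ N - 1) ^ j))
    (hLW : ∀ j : ℤ, ∀ x ∈ H.W j, L x ∈ H.W (j - 2))
    (hLF : ∀ p : ℤ, ∀ x ∈ H.F p, L.baseChange ℂ x ∈ H.F (p - 1))
    (hTW : ∀ j : ℤ, ∀ x ∈ H.W j, T x ∈ H.W j)
    (hTF : ∀ p : ℤ, ∀ x ∈ H.F p, T.baseChange ℂ x ∈ H.F p) :
    T ^ N = 1 := by
  classical
  by_cases hd : Module.finrank ℚ V = 0
  · haveI : Subsingleton V := Module.finrank_zero_iff.mp hd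
    exact Subsingleton.elim _ _
  -- Step 1 : `L.baseChange ℂ` preserves each `H.F p`.
  have hLceq : L.baseChange ℂ = ∑ j ∈ Finset.Icc 1 (Module.finrank ℚ V),
      (((-1 : ℚ) ^ (j + 1) / (j : ℚ)) • ((T.baseChange ℂ) ^ N - 1) ^ j) := by
    rw [hL]
    rw [show (∑ j ∈ Finset.Icc 1 (Module.finrank ℚ V),
        (((-1 : ℚ) ^ (j + 1) / (j : ℚ)) • (T ^ N - 1) ^ j)).baseChange ℂ
      = ∑ j ∈ Finset.Icc 1 (Module.finrank ℚ V),
        ((((-1 : ℚ) ^ (j + 1) / (j : ℚ)) • (T ^ N - 1) ^ j).baseChange ℂ) from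
      map_sum (LinearMap.baseChangeHom ℚ ℂ V V) _ _]
    refine Finset.sum_congr rfl fun j _ => ?_
    rw [LinearMap.baseChange_smul, LinearMap.baseChange_pow, LinearMap.baseChange_sub,
      LinearMap.baseChange_pow, LinearMap.baseChange_one]
  have pow_pres : ∀ (A : Module.End ℂ (ℂ ⊗[ℚ] V)) (P : Submodule ℂ (ℂ ⊗[ℚ] V)),
      (∀ y ∈ P, A y ∈ P) → ∀ (k : ℕ), ∀ y ∈ P, (A ^ k) y ∈ P := by
    intro A P hA k
    induction k with
    | zero => intro y hy; simpa using hy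
    | succ k ih =>
        intro y hy
        rw [pow_succ, Module.End.mul_apply]
        exact ih _ (hA y hy)
  have hLcF : ∀ p : ℤ, ∀ x ∈ H.F p, L.baseChange ℂ x ∈ H.F p := by
    intro p x hx
    rw [hLceq, LinearMap.sum_apply]
    refine Submodule.sum_mem _ fun j _ => ?_
    rw [LinearMap.smul_apply]
    refine Submodule.smul_of_tower_mem _ _ ?_
    have hUc : ∀ y ∈ H.F p, ((T.baseChange ℂ) ^ N - 1) y ∈ H.F p := by
      intro y hy
      rw [LinearMap.sub_apply, Module.End.one_apply]
      exact sub_mem (pow_pres _ _ (hTF p) N y hy) hy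
    exact pow_pres _ _ hUc j x hx
  -- Step 2 : `L.baseChange ℂ` preserves each `conjSub (H.F p)`.
  have hLcC : ∀ p : ℤ, ∀ x ∈ conjSub (H.F p), L.baseChange ℂ x ∈ conjSub (H.F p) :=
    fun p => MHSAux.mapsTo_conjSub L (hLcF p)
  -- Step 3 : `L.baseChange ℂ` shifts the weight filtration by `-2`.
  have hLcW : ∀ n : ℤ, ∀ x ∈ (H.W n).baseChange ℂ,
      L.baseChange ℂ x ∈ (H.W (n - 2)).baseChange ℂ :=
    fun n => MHSAux.map_baseChange_le L (hLW n)
  -- Step 4 : descent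
  have descent : ∀ (k : ℕ) (n : ℤ), ∀ x ∈ (H.W n).baseChange ℂ,
      L.baseChange ℂ x ∈ (H.W (n - 2 - k)).baseChange ℂ := by
    intro k
    induction k with
    | zero => intro n x hx; simpa using hLcW n x hx
    | succ k ih =>
        intro n x hx
        have hmem : ∀ p : ℤ, L.baseChange ℂ x ∈
            ((H.W (n - 2 - k)).baseChange ℂ ⊓ H.F p)
            ⊔ ((H.W (n - 2 - k)).baseChange ℂ ⊓ conjSub (H.F ((n - 2 - k) - p + 3)))
            ⊔ (H.W ((n - 2 - k) - 1)).baseChange ℂ := by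
          intro p
          have hx2 : x ∈ ((H.W n).baseChange ℂ ⊓ H.F p)
              ⊔ ((H.W n).baseChange ℂ ⊓ conjSub (H.F (n - p + 1)))
              ⊔ (H.W (n - 1)).baseChange ℂ := by
            rw [H.graded_sup n p]; exact hx
          obtain ⟨u, hu, c, hc, rfl⟩ := Submodule.mem_sup.mp hx2
          obtain ⟨a, ha, b, hb, rfl⟩ := Submodule.mem_sup.mp hu
          rw [map_add, map_add]
          refine Submodule.add_mem _ (Submodule.add_mem _ ?_ ?_) ?_
          · refine Submodule.mem_sup_left (Submodule.mem_sup_left ?_)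
            exact Submodule.mem_inf.mpr
              ⟨ih n a (Submodule.mem_inf.mp ha).1, hLcF p a (Submodule.mem_inf.mp ha).2⟩
          · refine Submodule.mem_sup_left (Submodule.mem_sup_right ?_)
            refine Submodule.mem_inf.mpr
              ⟨ih n b (Submodule.mem_inf.mp hb).1, ?_⟩
            have h1 := hLcC (n - p + 1) b (Submodule.mem_inf.mp hb).2
            exact MHSAux.conjSub_mono (H.antiF (by omega)) h1
          · refine Submodule.mem_sup_right ?_
            have h1 := ih (n - 1) c hc
            have e : n - 1 - 2 - (k : ℤ) = n - 2 - k - 1 := by ring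
            rwa [e] at h1
        have h2 := MHSAux.lemA H (n - 2 - k) _ (ih n x hx) hmem
        have e : n - 2 - (k : ℤ) - 1 = n - 2 - ((k : ℕ) + 1 : ℕ) := by push_cast; ring
        rwa [e] at h2
  -- Step 5 : conclude `L = 0`.
  have hL0 : L = 0 := by
    obtain ⟨a0, ha0⟩ := H.botW
    obtain ⟨b0, hb0⟩ := H.topW
    have hzero : ∀ x : ℂ ⊗[ℚ] V, L.baseChange ℂ x = 0 := by
      intro x
      have hx : x ∈ (H.W b0).baseChange ℂ := by
        rw [hb0, Submodule.baseChange_top]; trivial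
      have h1 := descent (b0 - a0).toNat b0 x hx
      have h2 : (H.W (b0 - 2 - (b0 - a0).toNat)).baseChange ℂ ≤ (H.W a0).baseChange ℂ :=
        MHSAux.baseChange_mono (H.monoW (by
          have := Int.self_le_toNat (b0 - a0); omega))
      have h3 := h2 h1
      rwa [ha0, Submodule.baseChange_bot, Submodule.mem_bot] at h3
    have hlt : LinearMap.lTensor ℂ L = 0 := LinearMap.ext fun x => hzero x
    exact (Module.FaithfullyFlat.zero_iff_lTensor_zero ℚ ℂ L).mpr hlt
  -- Step 6 : algebraic conclusion.
  have hd1 : 1 ∈ Finset.Icc 1 (Module.finrank ℚ V) := by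
    simp [Finset.mem_Icc, Nat.one_le_iff_ne_zero.mpr hd]
  set U : Module.End ℚ V := T ^ N - 1 with hU
  set S : Module.End ℚ V :=
    ∑ j ∈ Finset.Icc 1 (Module.finrank ℚ V),
      (((-1 : ℚ) ^ (j + 1) / (j : ℚ)) • U ^ (j - 1)) with hS
  have hLS : L = U * S := by
    rw [hL, hS, Finset.mul_sum]
    refine Finset.sum_congr rfl fun j hj => ?_
    have hj1 : 1 ≤ j := (Finset.mem_Icc.mp hj).1
    rw [mul_smul_comm, ← pow_succ', Nat.sub_add_cancel hj1]
  have hSunit : IsUnit S := by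
    have hsplit : S = (((-1 : ℚ) ^ (1 + 1) / ((1 : ℕ) : ℚ)) • U ^ (1 - 1)) +
        ∑ j ∈ (Finset.Icc 1 (Module.finrank ℚ V)).erase 1,
          (((-1 : ℚ) ^ (j + 1) / (j : ℚ)) • U ^ (j - 1)) := by
      rw [hS]
      exact (Finset.add_sum_erase _ _ hd1).symm
    have hone : (((-1 : ℚ) ^ (1 + 1) / ((1 : ℕ) : ℚ)) • U ^ (1 - 1)) = 1 := by
      norm_num
    have hnilsum : IsNilpotent (∑ j ∈ (Finset.Icc 1 (Module.finrank ℚ V)).erase 1,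
        (((-1 : ℚ) ^ (j + 1) / (j : ℚ)) • U ^ (j - 1))) := by
      refine Commute.isNilpotent_sum (fun j hj => ?_) (fun i j hi hj => ?_)
      · have hj2 : 1 ≤ j - 1 := by
          have := Finset.mem_erase.mp hj
          have := (Finset.mem_Icc.mp this.2).1
          omega
        exact (hnil.pow_of_pos (by omega)).smul _
      · exact (((Commute.refl U).pow_pow _ _).smul_left _).smul_right _
    rw [hsplit, hone]
    exact hnilsum.isUnit_one_add
  rw [hL0] at hLS
  have hU0 : U = 0 := (IsUnit.mul_left_eq_zero hSunit).mp hLS.symm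
  have : T ^ N - 1 = 0 := hU0
  exact sub_eq_zero.mp this
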